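/- arXiv:1305.1433 — 4 statements merged into one kernel-verified Lean document; each statement's English description precedes it below -/
import Mathlib

section
/- In an exact category, given a commutative square with horizontal maps admissible monomorphisms (inflations) i : A → B and i' : A' → B' and vertical maps f : A → A', f' : B → B', the square is a push-out if and only if the sequence A → B ⊕ A' → B' given by (i, -f) and (f', i') is a short exact sequence (i.e., (i,-f) is an inflation with cokernel (f', i')). -/
open CategoryTheory Limits ZeroObject

universe v u

variable (C : Type u) [Category.{v} C] [Preadditive C] [HasZeroObject C]
  [HasBinaryBiproducts C]

/-- An exact structure (in the sense of Quillen) on an additive category,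
given by a class of short exact sequences (conflations). -/
structure ExactStructure : Type (max u (v + 1)) where
  /-- the class of short exact sequences -/
  IsSES : ∀ {A B X : C}, (A ⟶ B) → (B ⟶ X) → Prop
  comp_zero : ∀ {A B X : C} {f : A ⟶ B} {g : B ⟶ X}, IsSES f g → f ≫ g = 0
  isKernel : ∀ {A B X : C} {f : A ⟶ B} {g : B ⟶ X} (h : IsSES f g),
      Nonempty (IsLimit (KernelFork.ofι f (comp_zero h)))
  isCokernel : ∀ {A B X : C} {f : A ⟶ B} {g : B ⟶ X} (h : IsSES f g),
      Nonempty (IsColimit (CokernelCofork.ofπ g (comp_zero h)))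
  ses_iso_congr : ∀ {A B X A' B' X' : C} {f : A ⟶ B} {g : B ⟶ X}
      (eA : A' ≅ A) (eB : B ≅ B') (eX : X ≅ X'), IsSES f g →
      IsSES (eA.hom ≫ f ≫ eB.hom) (eB.inv ≫ g ≫ eX.hom)
  id_ses : ∀ A : C, IsSES (𝟙 A) (0 : A ⟶ 0)
  id_ses' : ∀ A : C, IsSES (0 : (0 : C) ⟶ A) (𝟙 A)
  infl_comp : ∀ {A B X : C} (f : A ⟶ B) (f' : B ⟶ X),
      (∃ (Z : C) (g : B ⟶ Z), IsSES f g) → (∃ (Z : C) (g : X ⟶ Z), IsSES f' g) →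
      ∃ (Z : C) (g : X ⟶ Z), IsSES (f ≫ f') g
  defl_comp : ∀ {A B X : C} (g : A ⟶ B) (g' : B ⟶ X),
      (∃ (Z : C) (f : Z ⟶ A), IsSES f g) → (∃ (Z : C) (f : Z ⟶ B), IsSES f g') →
      ∃ (Z : C) (f : Z ⟶ A), IsSES f (g ≫ g')
  pushout_infl : ∀ {A B A' : C} (f : A ⟶ B) (a : A ⟶ A'),
      (∃ (Z : C) (g : B ⟶ Z), IsSES f g) →
      ∃ (P : C) (f' : A' ⟶ P) (b : B ⟶ P), IsPushout a f f' b ∧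
        ∃ (Z : C) (g : P ⟶ Z), IsSES f' g
  pullback_defl : ∀ {B X X' : C} (g : B ⟶ X) (x : X' ⟶ X),
      (∃ (Z : C) (f : Z ⟶ B), IsSES f g) →
      ∃ (P : C) (g' : P ⟶ X') (b : P ⟶ B), IsPullback g' b x g ∧
        ∃ (Z : C) (f : Z ⟶ P), IsSES f g'

variable {C}

namespace ExactStructure

variable (E : ExactStructure C)

/-- inflations (admissible monomorphisms) -/
def Infl {A B : C} (f : A ⟶ B) : Prop := ∃ (X : C) (g : B ⟶ X), E.IsSES f g

/-- deflations (admissible epimorphisms) -/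
def Defl {B X : C} (g : B ⟶ X) : Prop := ∃ (A : C) (f : A ⟶ B), E.IsSES f g

/-- projective objects relative to the exact structure -/
def Proj (P : C) : Prop :=
  ∀ ⦃B X : C⦄ (g : B ⟶ X), E.Defl g → ∀ h : P ⟶ X, ∃ l : P ⟶ B, l ≫ g = h

/-- injective objects relative to the exact structure -/
def Inj (I : C) : Prop :=
  ∀ ⦃A B : C⦄ (f : A ⟶ B), E.Infl f → ∀ h : A ⟶ I, ∃ l : B ⟶ I, f ≫ l = h

/-- the exact category has enough projectives -/
def EnoughProj : Prop :=
  ∀ X : C, ∃ (P K : C) (i : K ⟶ P) (p : P ⟶ X), E.Proj P ∧ E.IsSES i p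

/-- the exact category has enough injectives -/
def EnoughInj : Prop :=
  ∀ X : C, ∃ (I Z : C) (i : X ⟶ I) (p : I ⟶ Z), E.Inj I ∧ E.IsSES i p

end ExactStructure

/-- a morphism factors through an object of a given class of objects -/
def FactorsThru (S : Set C) {X Y : C} (f : X ⟶ Y) : Prop :=
  ∃ (W : C) (a : X ⟶ W) (b : W ⟶ Y), W ∈ S ∧ a ≫ b = f

/-- A cotorsion pair `(𝒰, 𝒱)` on the exact category `(C, E)`. -/
structure CotorsionPair (E : ExactStructure C) where
  U : Set C
  V : Set C
  U_summand : ∀ ⦃X Z : C⦄, Z ∈ U → (∃ (i : X ⟶ Z) (r : Z ⟶ X), i ≫ r = 𝟙 X) → X ∈ U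
  V_summand : ∀ ⦃X Z : C⦄, Z ∈ V → (∃ (i : X ⟶ Z) (r : Z ⟶ X), i ≫ r = 𝟙 X) → X ∈ V
  U_add : ∀ ⦃X Y : C⦄, X ∈ U → Y ∈ U → (X ⊞ Y) ∈ U
  V_add : ∀ ⦃X Y : C⦄, X ∈ V → Y ∈ V → (X ⊞ Y) ∈ V
  ext_vanish : ∀ ⦃A B X : C⦄ {f : A ⟶ B} {g : B ⟶ X}, E.IsSES f g → X ∈ U → A ∈ V →
      ∃ r : B ⟶ A, f ≫ r = 𝟙 A
  res : ∀ B : C, ∃ (VB UB : C) (i : VB ⟶ UB) (p : UB ⟶ B),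
      VB ∈ V ∧ UB ∈ U ∧ E.IsSES i p
  cores : ∀ B : C, ∃ (VB UB : C) (i : B ⟶ VB) (p : VB ⟶ UB),
      VB ∈ V ∧ UB ∈ U ∧ E.IsSES i p

namespace CotorsionPair

variable {E : ExactStructure C} (CP : CotorsionPair E)

/-- `𝒲 = 𝒰 ∩ 𝒱` -/
def W : Set C := CP.U ∩ CP.V

/-- `𝓑⁺`: objects admitting a short exact sequence `V ↣ W ↠ B` with `V ∈ 𝒱`, `W ∈ 𝒲`. -/
def Bplus : Set C :=
  {B | ∃ (V₀ W₀ : C) (i : V₀ ⟶ W₀) (p : W₀ ⟶ B), V₀ ∈ CP.V ∧ W₀ ∈ CP.W ∧ E.IsSES i p}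

/-- `𝓑⁻`: objects admitting a short exact sequence `B ↣ W ↠ U` with `W ∈ 𝒲`, `U ∈ 𝒰`. -/
def Bminus : Set C :=
  {B | ∃ (W₀ U₀ : C) (i : B ⟶ W₀) (p : W₀ ⟶ U₀), W₀ ∈ CP.W ∧ U₀ ∈ CP.U ∧ E.IsSES i p}

/-- the heart subcategory `𝓗 = 𝓑⁺ ∩ 𝓑⁻` -/
def Heart : Set C := CP.Bplus ∩ CP.Bminus

/-- the ideal relation defining the additive quotient `𝓑/𝒲` -/
def wRel : HomRel C := fun {X Y} f g =>
  ∃ (W : C) (a : X ⟶ W) (b : W ⟶ Y), W ∈ CP.W ∧ a ≫ b = f - g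

/-- the quotient category `𝓑/𝒲` -/
abbrev QW := CategoryTheory.Quotient CP.wRel

/-- the quotient functor `π : 𝓑 → 𝓑/𝒲` -/
abbrev qf : C ⥤ CP.QW := Quotient.functor _

/-- `𝓑⁺/𝒲` as a full subcategory of `𝓑/𝒲` -/
abbrev BplusCat := ObjectProperty.FullSubcategory (fun X : CP.QW => X.as ∈ CP.Bplus)

/-- `𝓑⁻/𝒲` as a full subcategory of `𝓑/𝒲` -/
abbrev BminusCat := ObjectProperty.FullSubcategory (fun X : CP.QW => X.as ∈ CP.Bminus)

/-- the heart `𝓗/𝒲` as a full subcategory of `𝓑/𝒲` -/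
abbrev HeartCat := ObjectProperty.FullSubcategory (fun X : CP.QW => X.as ∈ CP.Heart)

/-- the inclusion `𝓑⁺/𝒲 ↪ 𝓑/𝒲` -/
abbrev inclPlus : CP.BplusCat ⥤ CP.QW := ObjectProperty.ι _

/-- the inclusion `𝓑⁻/𝒲 ↪ 𝓑/𝒲` -/
abbrev inclMinus : CP.BminusCat ⥤ CP.QW := ObjectProperty.ι _

/-- the inclusion `𝓗/𝒲 ↪ 𝓑/𝒲` -/
abbrev inclHeart : CP.HeartCat ⥤ CP.QW := ObjectProperty.ι _

/-- `add(𝒰 ∗ 𝒱)`: objects `X` admitting a short exact sequence `U ↣ X ⊕ Y ↠ V`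
with `U ∈ 𝒰`, `V ∈ 𝒱`. -/
def addUV : Set C :=
  {X | ∃ (Y U₀ V₀ : C) (i : U₀ ⟶ X ⊞ Y) (p : X ⊞ Y ⟶ V₀),
    U₀ ∈ CP.U ∧ V₀ ∈ CP.V ∧ E.IsSES i p}

end CotorsionPair



section Aux

variable {E : ExactStructure C}

lemma infl_comp_iso {A B B' : C} {f : A ⟶ B} (hf : E.Infl f) (e : B ≅ B') :
    E.Infl (f ≫ e.hom) := by
  obtain ⟨Z, g, h⟩ := hf
  refine ⟨Z, e.inv ≫ g, ?_⟩
  simpa using E.ses_iso_congr (Iso.refl A) e (Iso.refl Z) h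

lemma infl_of_eq {A B : C} {f g : A ⟶ B} (hf : E.Infl f) (h : f = g) : E.Infl g := h ▸ hf

lemma infl_inl (A A' : C) : E.Infl (biprod.inl : A ⟶ A ⊞ A') := by
  obtain ⟨P, f', b, hp, hinf⟩ := E.pushout_infl (0 : (0 : C) ⟶ A') (0 : (0 : C) ⟶ A)
    ⟨A', 𝟙 A', E.id_ses' A'⟩
  have hw : (0 : (0 : C) ⟶ A) ≫ (biprod.inl : A ⟶ A ⊞ A')
      = (0 : (0 : C) ⟶ A') ≫ biprod.inr := by simp
  refine infl_of_eq (infl_comp_iso hinf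
    ⟨hp.desc biprod.inl biprod.inr hw, biprod.desc f' b, ?_, ?_⟩) ?_
  · apply hp.hom_ext <;> simp
  · ext <;> simp
  · simp

lemma infl_map {A B : C} (i : A ⟶ B) (A' : C) (hi : E.Infl i) :
    E.Infl (biprod.map i (𝟙 A')) := by
  obtain ⟨P, f', b, hp, hinf⟩ := E.pushout_infl i (biprod.inl : A ⟶ A ⊞ A') hi
  have hw : (biprod.inl : A ⟶ A ⊞ A') ≫ biprod.map i (𝟙 A') = i ≫ biprod.inl := by simp
  refine infl_of_eq (infl_comp_iso hinf
    ⟨hp.desc (biprod.map i (𝟙 A')) biprod.inl hw, biprod.desc b (biprod.inr ≫ f'), ?_, ?_⟩) ?_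
  · apply hp.hom_ext
    · rw [reassoc_of% (hp.inl_desc (biprod.map i (𝟙 A')) biprod.inl hw)]
      ext <;> simp [← hp.w]
    · rw [reassoc_of% (hp.inr_desc (biprod.map i (𝟙 A')) biprod.inl hw)]
      simp
  · ext <;> simp [hp.inl_desc, hp.inr_desc, ← hp.w]
  · exact hp.inl_desc _ _ _

lemma infl_lift {A B A' : C} (i : A ⟶ B) (f : A ⟶ A') (hi : E.Infl i) :
    E.Infl (biprod.lift i (-f)) := by
  have h1 : E.Infl (biprod.lift (𝟙 A) (-f)) := by
    refine infl_of_eq (infl_comp_iso (infl_inl A A')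
      ⟨biprod.lift biprod.fst (biprod.snd - biprod.fst ≫ f),
       biprod.lift biprod.fst (biprod.snd + biprod.fst ≫ f), ?_, ?_⟩) ?_
    · ext <;> simp
    · ext <;> simp
    · ext <;> simp
  obtain ⟨Z, g, hses⟩ := E.infl_comp (biprod.lift (𝟙 A) (-f)) (biprod.map i (𝟙 A'))
    h1 (infl_map i A' hi)
  refine ⟨Z, g, ?_⟩
  have : biprod.lift (𝟙 A) (-f) ≫ biprod.map i (𝟙 A') = biprod.lift i (-f) := by
    ext <;> simp
  rwa [this] at hses

end Aux

/-- a commutative square of inflations is a push-out iff the associated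
sequence `A ↣ B ⊞ A' ↠ B'` is a short exact sequence. -/
theorem stmt0 (E : ExactStructure C) {A B A' B' : C}
    (i : A ⟶ B) (i' : A' ⟶ B') (f : A ⟶ A') (f' : B ⟶ B')
    (hi : E.Infl i) (hi' : E.Infl i') (hcomm : i ≫ f' = f ≫ i') :
    IsPushout i f f' i' ↔ E.IsSES (biprod.lift i (-f)) (biprod.desc f' i') := by
  constructor
  · intro h
    obtain ⟨Z, g, hg⟩ := infl_lift i f hi
    have h1 : IsColimit (CokernelCofork.ofπ g (E.comp_zero hg)) := (E.isCokernel hg).some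
    have h2 : IsColimit (h.toCommSq.cokernelCofork) := h.isColimitCokernelCofork
    have key : g ≫ (h1.coconePointUniqueUpToIso h2).hom = biprod.desc f' i' :=
      h1.comp_coconePointUniqueUpToIso_hom h2 WalkingParallelPair.one
    have := E.ses_iso_congr (Iso.refl A) (Iso.refl (B ⊞ A'))
      (h1.coconePointUniqueUpToIso h2) hg
    simpa [key] using this
  · intro h
    have sq : CommSq i f f' i' := ⟨hcomm⟩
    exact IsPushout.of_isColimit'
      sq (sq.isColimitEquivIsColimitCokernelCofork.symm (E.isCokernel h).some)
end

section
/- Let (𝒰,𝒱) be a cotorsion pair on an exact category 𝓑 with enough projectives and injectives, and let V ∈ 𝒱. For any cosyzygy Ω⁻V of V (i.e., there is a short exact sequence V ↣ I ↠ Ω⁻V with I injective), the object Ω⁻V lies in 𝓑⁺, i.e., there is a short exact sequence V' ↣ W ↠ Ω⁻V with W ∈ 𝒰 ∩ 𝒱 and V' ∈ 𝒱. -/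
open CategoryTheory Limits ZeroObject

universe v u

variable (C : Type u) [Category.{v} C] [Preadditive C] [HasZeroObject C]
  [HasBinaryBiproducts C]

variable {C}

section Aux

namespace ExactStructure

variable {E : ExactStructure C}

lemma isSES_of_iso {A B X A' B' X' : C} {f : A ⟶ B} {g : B ⟶ X}
    {f' : A' ⟶ B'} {g' : B' ⟶ X'} (h : E.IsSES f g) (eA : A' ≅ A) (eB : B ≅ B') (eX : X ≅ X')
    (hf : eA.hom ≫ f ≫ eB.hom = f') (hg : eB.inv ≫ g ≫ eX.hom = g') : E.IsSES f' g' := by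
  subst hf hg; exact E.ses_iso_congr eA eB eX h

lemma ses_mono {A B X : C} {f : A ⟶ B} {g : B ⟶ X} (h : E.IsSES f g) : Mono f :=
  ⟨fun u v huv => Fork.IsLimit.hom_ext (E.isKernel h).some (by simpa using huv)⟩

lemma ses_epi {A B X : C} {f : A ⟶ B} {g : B ⟶ X} (h : E.IsSES f g) : Epi g :=
  ⟨fun u v huv => Cofork.IsColimit.hom_ext (E.isCokernel h).some (by simpa using huv)⟩

lemma kerLift {A B X : C} {f : A ⟶ B} {g : B ⟶ X} (h : E.IsSES f g)
    {T : C} (t : T ⟶ B) (ht : t ≫ g = 0) : ∃ l : T ⟶ A, l ≫ f = t :=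
  ⟨(KernelFork.IsLimit.lift' (E.isKernel h).some t ht).1,
    by simpa using (KernelFork.IsLimit.lift' (E.isKernel h).some t ht).2⟩

lemma cokerDesc {A B X : C} {f : A ⟶ B} {g : B ⟶ X} (h : E.IsSES f g)
    {T : C} (t : B ⟶ T) (ht : f ≫ t = 0) : ∃ l : X ⟶ T, g ≫ l = t :=
  ⟨(CokernelCofork.IsColimit.desc' (E.isCokernel h).some t ht).1,
    by simpa using (CokernelCofork.IsColimit.desc' (E.isCokernel h).some t ht).2⟩

/-- a retraction of the inflation yields a section of the deflation -/
lemma section_of_retraction {A B X : C} {f : A ⟶ B} {g : B ⟶ X} (h : E.IsSES f g)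
    (r : B ⟶ A) (hr : f ≫ r = 𝟙 A) : ∃ σ : X ⟶ B, σ ≫ g = 𝟙 X := by
  obtain ⟨σ, hσ⟩ := E.cokerDesc h (𝟙 B - r ≫ f)
    (by simp [Preadditive.comp_sub, reassoc_of% hr])
  haveI : Epi g := E.ses_epi h
  refine ⟨σ, ?_⟩
  rw [← cancel_epi g, ← Category.assoc, hσ]
  simp [Preadditive.sub_comp, Category.assoc, E.comp_zero h]

/-- a section of the deflation yields a retraction of the inflation -/
lemma retraction_of_section {A B X : C} {f : A ⟶ B} {g : B ⟶ X} (h : E.IsSES f g)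
    (σ : X ⟶ B) (hσ : σ ≫ g = 𝟙 X) : ∃ r : B ⟶ A, f ≫ r = 𝟙 A := by
  obtain ⟨r, hr⟩ := E.kerLift h (𝟙 B - g ≫ σ)
    (by simp [Preadditive.sub_comp, Category.assoc, hσ])
  haveI : Mono f := E.ses_mono h
  refine ⟨r, ?_⟩
  rw [← cancel_mono f, Category.assoc, hr]
  simp [Preadditive.comp_sub, reassoc_of% (E.comp_zero h)]

/-- The kernel of a pulled-back deflation is the kernel of the original deflation. -/
lemma pullback_ses {A B X X' P : C} {f : A ⟶ B} {g : B ⟶ X} (h : E.IsSES f g)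
    {g' : P ⟶ X'} {b : P ⟶ B} {x : X' ⟶ X} (hpb : IsPullback g' b x g)
    (hdefl : ∃ (Z : C) (k : Z ⟶ P), E.IsSES k g') :
    ∃ f₂ : A ⟶ P, E.IsSES f₂ g' ∧ f₂ ≫ b = f ∧ f₂ ≫ g' = 0 := by
  obtain ⟨Z, k, hk⟩ := hdefl
  have hfg0 : f ≫ g = 0 := E.comp_zero h
  have hkg0 : k ≫ g' = 0 := E.comp_zero hk
  haveI : Mono f := E.ses_mono h
  haveI : Mono k := E.ses_mono hk
  set f₂ : A ⟶ P := hpb.lift 0 f (by simp [hfg0]) with hf₂def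
  have hf₂g' : f₂ ≫ g' = 0 := hpb.lift_fst _ _ _
  have hf₂b : f₂ ≫ b = f := hpb.lift_snd _ _ _
  have hkbg : (k ≫ b) ≫ g = 0 := by
    rw [Category.assoc, ← hpb.w, ← Category.assoc, hkg0, Limits.zero_comp]
  obtain ⟨v, hv⟩ := E.kerLift h (k ≫ b) hkbg
  obtain ⟨u, hu⟩ := E.kerLift hk f₂ hf₂g'
  have hvf₂ : v ≫ f₂ = k := by
    apply hpb.hom_ext
    · rw [Category.assoc, hf₂g', Limits.comp_zero, hkg0]
    · rw [Category.assoc, hf₂b, hv]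
  have huv : u ≫ v = 𝟙 A := by
    rw [← cancel_mono f, Category.assoc, hv, ← Category.assoc, hu, hf₂b, Category.id_comp]
  have hvu : v ≫ u = 𝟙 Z := by
    rw [← cancel_mono k, Category.assoc, hu, hvf₂, Category.id_comp]
  refine ⟨f₂, ?_, hf₂b, hf₂g'⟩
  exact E.isSES_of_iso hk (Iso.mk u v huv hvu) (Iso.refl P) (Iso.refl X')
    (by simp [hu]) (by simp)

/-- Noether lemma: combining a conflation `A ↣ B₀ ↠ C₀` with a conflation `B₀ ↣ E₀ ↠ U`
gives conflations `A ↣ E₀ ↠ Q` and `C₀ ↣ Q ↠ U`. -/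
lemma noether {A B₀ C₀ E₀ U : C} {a : A ⟶ B₀} {c : B₀ ⟶ C₀} {f : B₀ ⟶ E₀} {g : E₀ ⟶ U}
    (hac : E.IsSES a c) (hfg : E.IsSES f g) :
    ∃ (Q : C) (d : E₀ ⟶ Q) (f₁ : C₀ ⟶ Q) (g₁ : Q ⟶ U),
      E.IsSES (a ≫ f) d ∧ E.IsSES f₁ g₁ ∧ c ≫ f₁ = f ≫ d ∧ d ≫ g₁ = g := by
  obtain ⟨Q, d, hd⟩ := E.infl_comp a f ⟨C₀, c, hac⟩ ⟨U, g, hfg⟩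
  have hac0 : a ≫ c = 0 := E.comp_zero hac
  have hfg0 : f ≫ g = 0 := E.comp_zero hfg
  have hafd0 : (a ≫ f) ≫ d = 0 := E.comp_zero hd
  haveI : Epi c := E.ses_epi hac
  haveI : Epi d := E.ses_epi hd
  haveI : Epi g := E.ses_epi hfg
  obtain ⟨f₁, hf₁⟩ := E.cokerDesc hac (f ≫ d) (by rw [← Category.assoc]; exact hafd0)
  obtain ⟨g₁, hg₁⟩ := E.cokerDesc hd g (by rw [Category.assoc, hfg0, Limits.comp_zero])
  -- the pushout square from the axiom
  obtain ⟨P, f', b, hpo, R, s, hs⟩ := E.pushout_infl f c ⟨U, g, hfg⟩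
  haveI : Epi s := E.ses_epi hs
  have hf's0 : f' ≫ s = 0 := E.comp_zero hs
  have hfb0 : (a ≫ f) ≫ b = 0 := by
    rw [Category.assoc, ← hpo.w, ← Category.assoc, hac0, Limits.zero_comp]
  -- construct the comparison iso `P ≅ Q` by hand
  obtain ⟨ψ, hψ⟩ := E.cokerDesc hd b hfb0
  set φ : P ⟶ Q := hpo.desc f₁ d hf₁ with hφdef
  have hf'φ : f' ≫ φ = f₁ := hpo.inl_desc _ _ _
  have hbφ : b ≫ φ = d := hpo.inr_desc _ _ _
  have hf₁ψ : f₁ ≫ ψ = f' := by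
    rw [← cancel_epi c, ← Category.assoc, hf₁, Category.assoc, hψ, hpo.w]
  have hφψ : φ ≫ ψ = 𝟙 P := by
    apply hpo.hom_ext
    · rw [← Category.assoc, hf'φ, hf₁ψ, Category.comp_id]
    · rw [← Category.assoc, hbφ, hψ, Category.comp_id]
  have hψφ : ψ ≫ φ = 𝟙 Q := by
    rw [← cancel_epi d, ← Category.assoc, hψ, hbφ, Category.comp_id]
  have hf₁0 : f₁ ≫ g₁ = 0 := by
    rw [← cancel_epi c, ← Category.assoc, hf₁, Category.assoc, hg₁, hfg0,
      Limits.comp_zero]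
  -- iso `R ≅ U`
  obtain ⟨e₁, he₁⟩ := E.cokerDesc hs (φ ≫ g₁) (by rw [← Category.assoc, hf'φ, hf₁0])
  obtain ⟨e₂, he₂⟩ := E.cokerDesc hfg (b ≫ s)
    (by rw [← Category.assoc, ← hpo.w, Category.assoc, hf's0, Limits.comp_zero])
  have hg₁e₂ : g₁ ≫ e₂ = ψ ≫ s := by
    rw [← cancel_epi d, ← Category.assoc, hg₁, he₂, ← Category.assoc, hψ]
  have he₁₂ : e₁ ≫ e₂ = 𝟙 R := by
    rw [← cancel_epi s, ← Category.assoc, he₁, Category.assoc, hg₁e₂, ← Category.assoc,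
      hφψ, Category.id_comp, Category.comp_id]
  have he₂₁ : e₂ ≫ e₁ = 𝟙 U := by
    rw [← cancel_epi g, ← Category.assoc, he₂, Category.assoc, he₁, ← Category.assoc, hbφ,
      hg₁, Category.comp_id]
  refine ⟨Q, d, f₁, g₁, hd, ?_, hf₁, hg₁⟩
  refine E.isSES_of_iso hs (Iso.refl C₀) (Iso.mk φ ψ hφψ hψφ) (Iso.mk e₁ e₂ he₁₂ he₂₁)
    (by simpa using hf'φ) ?_
  show ψ ≫ s ≫ e₁ = g₁
  rw [he₁, ← Category.assoc, hψφ, Category.id_comp]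

end ExactStructure

namespace CotorsionPair

variable {E : ExactStructure C} (CP : CotorsionPair E)

/-- injective objects lie in `𝒱` -/
lemma inj_mem_V {I : C} (hinj : E.Inj I) : I ∈ CP.V := by
  obtain ⟨V₁, U₁, i₁, p₁, hV₁, hU₁, hses₁⟩ := CP.cores I
  obtain ⟨l, hl⟩ := hinj i₁ ⟨U₁, p₁, hses₁⟩ (𝟙 I)
  exact CP.V_summand hV₁ ⟨i₁, l, hl⟩

/-- If every conflation out of `X` with quotient in `𝒰` splits, then `X ∈ 𝒱`. -/
lemma mem_V_of_split {X : C}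
    (hsplit : ∀ ⦃B U : C⦄ (f : X ⟶ B) (g : B ⟶ U), U ∈ CP.U → E.IsSES f g →
      ∃ r : B ⟶ X, f ≫ r = 𝟙 X) : X ∈ CP.V := by
  obtain ⟨V₁, U₁, i₁, p₁, hV₁, hU₁, hses₁⟩ := CP.cores X
  obtain ⟨r, hr⟩ := hsplit i₁ p₁ hU₁ hses₁
  exact CP.V_summand hV₁ ⟨i₁, r, hr⟩

/-- `𝒱` is closed under extensions. -/
lemma V_ext {A Y Z : C} {a : A ⟶ Y} {c : Y ⟶ Z} (h : E.IsSES a c)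
    (hA : A ∈ CP.V) (hZ : Z ∈ CP.V) : Y ∈ CP.V := by
  apply CP.mem_V_of_split
  intro B U f g hU hfg
  obtain ⟨Q, d, f₁, g₁, hd, hQ, hsq, hdg⟩ := ExactStructure.noether h hfg
  obtain ⟨ρ, hρ⟩ := CP.ext_vanish hQ hU hZ
  obtain ⟨σ, hσ⟩ := E.section_of_retraction hQ ρ hρ
  obtain ⟨P₃, d₃, b₃, hpb₃, hdefl₃⟩ := E.pullback_defl d σ ⟨A, a ≫ f, hd⟩
  obtain ⟨f₃, h₃, hf₃b, -⟩ := E.pullback_ses hd hpb₃ hdefl₃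
  obtain ⟨r₃, hr₃⟩ := CP.ext_vanish h₃ hU hA
  obtain ⟨σ₃, hσ₃⟩ := E.section_of_retraction h₃ r₃ hr₃
  have hb₃g : b₃ ≫ g = d₃ := by
    rw [← hdg, ← Category.assoc, ← hpb₃.w, Category.assoc, hσ, Category.comp_id]
  have hτ : (σ₃ ≫ b₃) ≫ g = 𝟙 U := by rw [Category.assoc, hb₃g, hσ₃]
  exact E.retraction_of_section hfg (σ₃ ≫ b₃) hτ

end CotorsionPair

end Aux

/-- any cosyzygy of an object of `𝒱` lies in `𝓑⁺`. -/
theorem stmt3 (E : ExactStructure C) (CP : CotorsionPair E)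
    (hEP : E.EnoughProj) (hEI : E.EnoughInj)
    {V I ΩmV : C} (hV : V ∈ CP.V) (i : V ⟶ I) (p : I ⟶ ΩmV)
    (hinj : E.Inj I) (hses : E.IsSES i p) :
    ∃ (V' W : C) (i' : V' ⟶ W) (p' : W ⟶ ΩmV),
      V' ∈ CP.V ∧ W ∈ CP.W ∧ E.IsSES i' p' := by
  have hIV : I ∈ CP.V := CP.inj_mem_V hinj
  obtain ⟨VB, UB, j, q, hVB, hUB, hres⟩ := CP.res ΩmV
  obtain ⟨P, p', b, hpb, hdefl⟩ := E.pullback_defl p q ⟨V, i, hses⟩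
  obtain ⟨f₂, h₂, hf₂b, hf₂p'⟩ := E.pullback_ses hses hpb hdefl
  obtain ⟨P', q', b', hpb', hdefl'⟩ := E.pullback_defl q p ⟨VB, j, hres⟩
  obtain ⟨f₃, h₃, hf₃b', hf₃q'⟩ := E.pullback_ses hres hpb' hdefl'
  -- compare the two pullbacks of the cospan `(q, p)`
  have hpb₂ : IsPullback b' q' q p := hpb'.flip
  set φ : P' ≅ P := hpb₂.isoIsPullback _ _ hpb with hφdef
  have hφp' : φ.hom ≫ p' = b' := hpb₂.isoIsPullback_hom_fst _ _ hpb
  have hφb : φ.hom ≫ b = q' := hpb₂.isoIsPullback_hom_snd _ _ hpb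
  -- `P` is an extension of `I` by `V_B`, hence lies in `𝒱`
  have h₃' : E.IsSES (f₃ ≫ φ.hom) (φ.inv ≫ q') :=
    E.isSES_of_iso h₃ (Iso.refl VB) φ (Iso.refl I) (by simp) (by simp)
  have hPV : P ∈ CP.V := CP.V_ext h₃' hVB hIV
  -- the conflation `V ↣ P ↠ U_B` splits, so `U_B` is a summand of `P`
  obtain ⟨r, hr⟩ := CP.ext_vanish h₂ hUB hV
  obtain ⟨σ, hσ⟩ := E.section_of_retraction h₂ r hr
  exact ⟨VB, UB, j, q, hVB, ⟨hUB, CP.V_summand hPV ⟨σ, p', hσ⟩⟩, hres⟩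
end

section
/- Let (𝒰,𝒱) be a cotorsion pair on an exact category 𝓑 with enough projectives and injectives, and let 𝒲 = 𝒰 ∩ 𝒱. For any object B ∈ 𝓑⁺ and any object U ∈ 𝒰, every morphism U → B factors through an object of 𝒲; i.e., Hom_{𝓑/𝒲}(U, B) = 0 in the additive quotient 𝓑/𝒲. -/
open CategoryTheory Limits ZeroObject

universe v u

variable (C : Type u) [Category.{v} C] [Preadditive C] [HasZeroObject C]
  [HasBinaryBiproducts C]

variable {C}

/-- for `B ∈ 𝓑⁺` and `U ∈ 𝒰`, every morphism `U ⟶ B` factors through `𝒲`,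
i.e. `Hom_{𝓑/𝒲}(U, B) = 0`. -/
theorem stmt4 (E : ExactStructure C) (CP : CotorsionPair E)
    (hEP : E.EnoughProj) (hEI : E.EnoughInj)
    {B U : C} (hB : B ∈ CP.Bplus) (hU : U ∈ CP.U) (f : U ⟶ B) :
    FactorsThru CP.W f := by
  obtain ⟨V₀, W₀, i, p, hV₀, hW₀, hses⟩ := hB
  obtain ⟨P, g', b, hpb, Z, f₀, hses'⟩ := E.pullback_defl p f ⟨V₀, i, hses⟩
  obtain ⟨hlimZ⟩ := E.isKernel hses'
  obtain ⟨hlimV⟩ := E.isKernel hses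
  obtain ⟨hcolimU⟩ := E.isCokernel hses'
  have hcomm : (0 : V₀ ⟶ U) ≫ f = i ≫ p := by
    rw [E.comp_zero hses, zero_comp]
  let v : V₀ ⟶ P := hpb.lift 0 i hcomm
  have hv1 : v ≫ g' = 0 := hpb.lift_fst 0 i hcomm
  have hv2 : v ≫ b = i := hpb.lift_snd 0 i hcomm
  obtain ⟨w, hw⟩ := KernelFork.IsLimit.lift' hlimZ v hv1
  have hub : (f₀ ≫ b) ≫ p = 0 := by
    rw [Category.assoc, ← hpb.w, ← Category.assoc, E.comp_zero hses', zero_comp]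
  obtain ⟨u, hu⟩ := KernelFork.IsLimit.lift' hlimV (f₀ ≫ b) hub
  simp only [Fork.ι_ofι] at hw hu
  have huw : u ≫ w = 𝟙 Z := by
    apply Fork.IsLimit.hom_ext hlimZ
    simp only [Fork.ι_ofι]
    rw [Category.assoc, hw, Category.id_comp]
    apply hpb.hom_ext
    · rw [Category.assoc, hv1, comp_zero, E.comp_zero hses']
    · rw [Category.assoc, hv2, hu]
  have hZV : Z ∈ CP.V := CP.V_summand hV₀ ⟨u, w, huw⟩
  obtain ⟨r, hr⟩ := CP.ext_vanish hses' hU hZV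
  have h1 : f₀ ≫ (𝟙 P - r ≫ f₀) = 0 := by
    rw [Preadditive.comp_sub, Category.comp_id, ← Category.assoc, hr,
      Category.id_comp, sub_self]
  obtain ⟨s, hs⟩ := CokernelCofork.IsColimit.desc' hcolimU (𝟙 P - r ≫ f₀) h1
  simp only [Cofork.π_ofπ] at hs
  have hsec : s ≫ g' = 𝟙 U := by
    apply Cofork.IsColimit.hom_ext hcolimU
    simp only [Cofork.π_ofπ]
    rw [← Category.assoc, hs, Preadditive.sub_comp]
    simp [E.comp_zero hses']
  refine ⟨W₀, s ≫ b, p, hW₀, ?_⟩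
  rw [Category.assoc, ← hpb.w, ← Category.assoc, hsec, Category.id_comp]
end

section
/- Let (𝒰,𝒱) be a cotorsion pair on an exact category 𝓑 with enough projectives and injectives. The short exact sequence B ↣ B⁺ ↠ U⁰ from the canonical construction of B⁺ is a reflection sequence for B: there is a commutative diagram from a projective presentation ΩU⁰ ↣ P ↠ U⁰ to B ↣ B⁺ ↠ U⁰ in which the induced map ΩU⁰ → B factors through an object of 𝒰. -/
open CategoryTheory Limits ZeroObject

universe v u

variable (C : Type u) [Category.{v} C] [Preadditive C] [HasZeroObject C]
  [HasBinaryBiproducts C]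

variable {C}

/-- the canonical short exact sequence `B ↣ B⁺ ↠ U⁰` is a reflection
sequence for `B`: there is a commutative diagram from a projective presentation
`ΩU⁰ ↣ P ↠ U⁰` to it whose left vertical map factors through `𝒰`. -/
theorem stmt7 (E : ExactStructure C) (CP : CotorsionPair E)
    (hEP : E.EnoughProj) (hEI : E.EnoughInj)
    {B : C}
    {VB UB W0B U0B Bp : C} {vB : VB ⟶ UB} {uB : UB ⟶ B} {wB' : UB ⟶ W0B}
    {w0B : W0B ⟶ U0B} {αB : B ⟶ Bp} {wB : W0B ⟶ Bp} {pB : Bp ⟶ U0B}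
    (hVB : VB ∈ CP.V) (hUB : UB ∈ CP.U) (hW0B : W0B ∈ CP.W) (hU0B : U0B ∈ CP.U)
    (h1B : E.IsSES vB uB) (h2B : E.IsSES wB' w0B)
    (hpoB : IsPushout uB wB' αB wB) (h3B : E.IsSES αB pB)
    :
    ∃ (ΩU P : C) (q : ΩU ⟶ P) (pU : P ⟶ U0B) (x : ΩU ⟶ B) (p : P ⟶ Bp),
      E.Proj P ∧ E.IsSES q pU ∧ q ≫ p = x ≫ αB ∧ p ≫ pB = pU ∧
      FactorsThru CP.U x := by
  -- projective presentation of U0B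
  obtain ⟨P, ΩU, q, pU0, hP, hSES⟩ := hEP U0B
  -- lift pU0 along w0B
  obtain ⟨t, ht⟩ := hP w0B ⟨UB, wB', h2B⟩ pU0
  -- q ≫ t kills w0B, factor through the kernel wB'
  obtain ⟨ck2⟩ := E.isCokernel h2B
  obtain ⟨k2⟩ := E.isKernel h2B
  have hqt : (q ≫ t) ≫ w0B = 0 := by rw [Category.assoc, ht, E.comp_zero hSES]
  obtain ⟨y, hy⟩ := KernelFork.IsLimit.lift' k2 (q ≫ t) hqt
  simp only [Fork.ι_ofι] at hy
  -- the comparison automorphism s of U0B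
  have hwpB : wB' ≫ (wB ≫ pB) = 0 := by
    rw [← hpoB.w_assoc, E.comp_zero h3B, comp_zero]
  obtain ⟨s, hs⟩ := CokernelCofork.IsColimit.desc' ck2 (wB ≫ pB) hwpB
  simp only [Cofork.π_ofπ] at hs
  -- the pushout-induced cokernel map c of αB
  have hc0 : uB ≫ (0 : B ⟶ U0B) = wB' ≫ w0B := by rw [comp_zero, E.comp_zero h2B]
  set c : Bp ⟶ U0B := hpoB.desc 0 w0B hc0 with hcdef
  obtain ⟨ck3⟩ := E.isCokernel h3B
  obtain ⟨s', hs'⟩ := CokernelCofork.IsColimit.desc' ck3 c (by simp [hcdef])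
  simp only [Cofork.π_ofπ] at hs'
  have hcs : c ≫ s = pB := by
    apply hpoB.hom_ext
    · rw [hpoB.inl_desc_assoc, zero_comp, E.comp_zero h3B]
    · rw [hpoB.inr_desc_assoc, hs]
  have hss' : s ≫ s' = 𝟙 U0B := by
    apply Cofork.IsColimit.hom_ext ck2
    simp only [Cofork.π_ofπ]
    rw [← Category.assoc, hs, Category.assoc, hs', hpoB.inr_desc]; simp
  have hs's : s' ≫ s = 𝟙 U0B := by
    apply Cofork.IsColimit.hom_ext ck3
    simp only [Cofork.π_ofπ]
    rw [← Category.assoc, hs', hcs]; simp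
  -- the SES q ≫ (pU0 ≫ s)
  have hSES' : E.IsSES q (pU0 ≫ s) := by
    have := E.ses_iso_congr (Iso.refl ΩU) (Iso.refl P)
      ⟨s, s', hss', hs's⟩ hSES
    simpa using this
  refine ⟨ΩU, P, q, pU0 ≫ s, y ≫ uB, t ≫ wB, hP, hSES', ?_, ?_,
    ⟨UB, y, uB, hUB, rfl⟩⟩
  · rw [← Category.assoc, ← hy, Category.assoc, ← hpoB.w, ← Category.assoc]
  · rw [Category.assoc, ← hs, ← Category.assoc, ht]
end
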